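/- Let u ∈ L^p(E,m), 1 ≤ p < ∞, satisfy αU_α u = u m-a.e. for all α > 0. Then for every constant c ≥ 0 the set {u ≤ c} is U-absorbing, and u is U-invariant; moreover αU*_α u = u m-a.e. for all α > 0. -/

import Mathlib

open MeasureTheory ENNReal Filter Set

/-- A sub-Markovian resolvent of kernels on a measurable space `E`. -/
structure SubMarkovResolvent (E : Type*) [MeasurableSpace E] where
  /-- the kernel `U_α` for each `α > 0` -/
  kernel : ℝ → E → MeasureTheory.Measure E
  measurable_op : ∀ α : ℝ, 0 < α → ∀ f : E → ℝ≥0∞, Measurable f →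
    Measurable (fun x => ∫⁻ y, f y ∂(kernel α x))
  resolvent_eq : ∀ α β : ℝ, 0 < α → α ≤ β → ∀ f : E → ℝ≥0∞, Measurable f → ∀ x,
    ∫⁻ y, f y ∂(kernel α x)
      = (∫⁻ y, f y ∂(kernel β x))
        + ENNReal.ofReal (β - α) * ∫⁻ y, (∫⁻ z, f z ∂(kernel β y)) ∂(kernel α x)
  subMarkov : ∀ α : ℝ, 0 < α → ∀ x, ENNReal.ofReal α * kernel α x Set.univ ≤ 1

namespace SubMarkovResolvent

variable {E : Type*} [MeasurableSpace E]

/-- The action of `U_α` on positive measurable functions. -/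
noncomputable def op (R : SubMarkovResolvent E) (α : ℝ) (f : E → ℝ≥0∞) (x : E) : ℝ≥0∞ :=
  ∫⁻ y, f y ∂(R.kernel α x)

/-- The action of `U_α` on real-valued functions. -/
noncomputable def opR (R : SubMarkovResolvent E) (α : ℝ) (f : E → ℝ) (x : E) : ℝ :=
  ∫ y, f y ∂(R.kernel α x)

/-- The initial (potential) kernel `U = sup_{α > 0} U_α`. -/
noncomputable def pot (R : SubMarkovResolvent E) (f : E → ℝ≥0∞) (x : E) : ℝ≥0∞ :=
  ⨆ (α : ℝ) (_ : 0 < α), R.op α f x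

/-- `m` is sub-invariant: `m ∘ (α U_α) ≤ m` for all `α > 0`. -/
def SubInvariant (R : SubMarkovResolvent E) (m : Measure E) : Prop :=
  ∀ α : ℝ, 0 < α → ∀ f : E → ℝ≥0∞, Measurable f →
    ENNReal.ofReal α * ∫⁻ x, R.op α f x ∂m ≤ ∫⁻ x, f x ∂m

/-- `U` is `m`-transient. -/
def Transient (R : SubMarkovResolvent E) (m : Measure E) : Prop :=
  ∃ f : E → ℝ≥0∞, Measurable f ∧ (∫⁻ x, f x ∂m < ⊤) ∧
    (∀ᵐ x ∂m, 0 < f x) ∧ (∀ᵐ x ∂m, R.pot f x < ⊤)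

/-- `U` is `m`-recurrent. -/
def Recurrent (R : SubMarkovResolvent E) (m : Measure E) : Prop :=
  ∀ f : E → ℝ≥0∞, Measurable f → (∫⁻ x, f x ∂m < ⊤) →
    m {x | 0 < R.pot f x ∧ R.pot f x < ⊤} = 0

/-- `A` is `U`-absorbing with respect to `m`. -/
def Absorbing (R : SubMarkovResolvent E) (m : Measure E) (A : Set E) : Prop :=
  MeasurableSet A ∧ ∀ᵐ x ∂m, x ∈ A → R.pot (Set.indicator Aᶜ 1) x = 0

/-- `U` is `m`-irreducible. -/
def Irreducible (R : SubMarkovResolvent E) (m : Measure E) : Prop :=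
  ∀ A : Set E, R.Absorbing m A → m A = 0 ∨ m Aᶜ = 0

/-- `u` is `U`-excessive: supermedian and `α U_α u ↑ u` as `α → ∞`. -/
def Excessive (R : SubMarkovResolvent E) (u : E → ℝ≥0∞) : Prop :=
  Measurable u ∧ (∀ α : ℝ, 0 < α → ∀ x, ENNReal.ofReal α * R.op α u x ≤ u x) ∧
    (∀ x, (⨆ (α : ℝ) (_ : 0 < α), ENNReal.ofReal α * R.op α u x) = u x)

/-- The complete maximum principle for the initial kernel of `U`. -/
def CompleteMaxPrinciple (R : SubMarkovResolvent E) : Prop :=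
  ∀ (f g : E → ℝ≥0∞) (c : ℝ≥0∞), Measurable f → Measurable g →
    (∀ x, 0 < f x → R.pot f x ≤ R.pot g x + c) → ∀ x, R.pot f x ≤ R.pot g x + c

/-- `U` and `U*` are in weak duality with respect to `m`. -/
def InDuality (R S : SubMarkovResolvent E) (m : Measure E) : Prop :=
  ∀ α : ℝ, 0 < α → ∀ f g : E → ℝ≥0∞, Measurable f → Measurable g →
    ∫⁻ x, f x * R.op α g x ∂m = ∫⁻ x, g x * S.op α f x ∂m

/-- A real-valued function `v` is `U`-invariant with respect to `m`:
`U_α(v f) = v ⋅ U_α f` `m`-a.e. for all `α > 0` and bounded positive measurable `f`. -/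
def Invariant (R : SubMarkovResolvent E) (m : Measure E) (v : E → ℝ) : Prop :=
  ∀ α : ℝ, 0 < α → ∀ f : E → ℝ, Measurable f → (∀ x, 0 ≤ f x) → (∃ C : ℝ, ∀ x, f x ≤ C) →
    ∀ᵐ x ∂m, R.opR α (fun y => v y * f y) x = v x * R.opR α f x

end SubMarkovResolvent

section Aux

variable {E : Type*} [MeasurableSpace E]

/-- Jensen's inequality for a sub-probability measure, via Hölder. -/
lemma aux_jensen (ν : MeasureTheory.Measure E) (hν : ν Set.univ ≤ 1) {f : E → ℝ≥0∞}
    (hf : Measurable f) {pr : ℝ} (hpr : 1 ≤ pr) :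
    (∫⁻ y, f y ∂ν) ^ pr ≤ ∫⁻ y, f y ^ pr ∂ν := by
  have hpr0 : (0:ℝ) < pr := lt_of_lt_of_le zero_lt_one hpr
  rcases eq_or_lt_of_le hpr with h1 | h1
  · simp [← h1]
  · have hpq : pr.HolderConjugate (Real.conjExponent pr) := Real.HolderConjugate.conjExponent h1
    have h := ENNReal.lintegral_mul_le_Lp_mul_Lq ν hpq hf.aemeasurable
      (aemeasurable_const (b := (1:ℝ≥0∞)))
    simp only [Pi.mul_apply, mul_one] at h
    have h2 : (∫⁻ _, (1:ℝ≥0∞) ^ Real.conjExponent pr ∂ν) ^ (1 / Real.conjExponent pr) ≤ 1 := by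
      simp only [ENNReal.one_rpow, lintegral_one]
      exact ENNReal.rpow_le_one hν (by have := hpq.symm.pos; positivity)
    have h3 : ∫⁻ y, f y ∂ν ≤ (∫⁻ y, f y ^ pr ∂ν) ^ (1 / pr) := by
      calc ∫⁻ y, f y ∂ν ≤ (∫⁻ a, f a ^ pr ∂ν) ^ (1 / pr) *
            (∫⁻ _, (1:ℝ≥0∞) ^ Real.conjExponent pr ∂ν) ^ (1 / Real.conjExponent pr) := h
        _ ≤ (∫⁻ a, f a ^ pr ∂ν) ^ (1 / pr) * 1 := by gcongr
        _ = (∫⁻ a, f a ^ pr ∂ν) ^ (1 / pr) := mul_one _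
    calc (∫⁻ y, f y ∂ν) ^ pr ≤ ((∫⁻ y, f y ^ pr ∂ν) ^ (1 / pr)) ^ pr :=
          ENNReal.rpow_le_rpow h3 hpr0.le
      _ = ∫⁻ y, f y ^ pr ∂ν := by
          rw [← ENNReal.rpow_mul, one_div, inv_mul_cancel₀ hpr0.ne', ENNReal.rpow_one]

namespace SubMarkovResolvent

lemma kernel_fin (R : SubMarkovResolvent E) {α : ℝ} (hα : 0 < α) (x : E) :
    MeasureTheory.IsFiniteMeasure (R.kernel α x) := by
  constructor
  have h := R.subMarkov α hα x
  rcases eq_or_ne (R.kernel α x Set.univ) ⊤ with h' | h'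
  · rw [h', ENNReal.mul_top (ENNReal.ofReal_pos.2 hα).ne'] at h
    simp at h
  · exact h'.lt_top

lemma mass_toReal (R : SubMarkovResolvent E) {α : ℝ} (hα : 0 < α) (x : E) :
    α * (R.kernel α x Set.univ).toReal ≤ 1 := by
  have h := R.subMarkov α hα x
  have := ENNReal.toReal_mono (by simp) h
  rwa [ENNReal.toReal_mul, ENNReal.toReal_ofReal hα.le, ENNReal.toReal_one] at this

lemma op_anti (R : SubMarkovResolvent E) {α β : ℝ} (hα : 0 < α) (hαβ : α ≤ β)
    {f : E → ℝ≥0∞} (hf : Measurable f) (x : E) : R.op β f x ≤ R.op α f x := by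
  have h := R.resolvent_eq α β hα hαβ f hf x
  show (∫⁻ y, f y ∂(R.kernel β x)) ≤ ∫⁻ y, f y ∂(R.kernel α x)
  rw [h]
  exact le_self_add

/-- Level-set identity: if `α U_α u = u` a.e. and `u ∈ L^pr`, then for `c ≥ 0` the function
`(u - c)⁺` is also invariant under `α U_α`. -/
lemma harmonic_level (R : SubMarkovResolvent E) (m : MeasureTheory.Measure E)
    (hm : R.SubInvariant m) {pr : ℝ} (hpr : 1 ≤ pr)
    {u : E → ℝ} (hmu : Measurable u)
    (hLp : ∫⁻ x, (ENNReal.ofReal |u x|) ^ pr ∂m ≠ ⊤)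
    {α : ℝ} (hα : 0 < α) (hh : ∀ᵐ x ∂m, α * R.opR α u x = u x)
    {c : ℝ} (hc : 0 ≤ c) :
    ∀ᵐ x ∂m, ENNReal.ofReal (u x - c)
      = ENNReal.ofReal α * R.op α (fun y => ENNReal.ofReal (u y - c)) x := by
  have hpr0 : (0:ℝ) < pr := lt_of_lt_of_le zero_lt_one hpr
  set w : E → ℝ≥0∞ := fun y => ENNReal.ofReal (u y - c) with hwdef
  have hwm : Measurable w := (hmu.sub measurable_const).ennreal_ofReal
  -- Step 1: `w` is submedian a.e.
  have hsub : ∀ᵐ x ∂m, w x ≤ ENNReal.ofReal α * R.op α w x := by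
    filter_upwards [hh] with x hx
    by_cases hcx : u x ≤ c
    · have : w x = 0 := ENNReal.ofReal_eq_zero.2 (by linarith)
      rw [this]; exact zero_le
    push_neg at hcx
    by_cases hi : MeasureTheory.Integrable u (R.kernel α x)
    · haveI := R.kernel_fin hα x
      have hic : MeasureTheory.Integrable (fun y => u y - c) (R.kernel α x) :=
        hi.sub (MeasureTheory.integrable_const c)
      have hux : α * ∫ y, u y ∂(R.kernel α x) = u x := hx
      have h1 : u x - c ≤ α * ∫ y, (u y - c) ∂(R.kernel α x) := by
        rw [MeasureTheory.integral_sub hi (MeasureTheory.integrable_const c),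
          MeasureTheory.integral_const, smul_eq_mul]
        have h2 := R.mass_toReal hα x
        have hnn : (0:ℝ) ≤ (R.kernel α x Set.univ).toReal := ENNReal.toReal_nonneg
        have h3 : α * (R.kernel α x Set.univ).toReal * c ≤ c := by
          calc α * (R.kernel α x Set.univ).toReal * c ≤ 1 * c :=
                mul_le_mul_of_nonneg_right h2 hc
            _ = c := one_mul c
        have h4 : α * ((∫ y, u y ∂(R.kernel α x)) - (R.kernel α x Set.univ).toReal * c)
            = u x - α * (R.kernel α x Set.univ).toReal * c := by
          rw [mul_sub, hux]; ring
        rw [measureReal_def, h4]; linarith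
      calc w x ≤ ENNReal.ofReal (α * ∫ y, (u y - c) ∂(R.kernel α x)) :=
            ENNReal.ofReal_le_ofReal h1
        _ = ENNReal.ofReal α * ENNReal.ofReal (∫ y, (u y - c) ∂(R.kernel α x)) :=
            ENNReal.ofReal_mul hα.le
        _ ≤ ENNReal.ofReal α * R.op α w x := by
            gcongr
            calc ENNReal.ofReal (∫ y, (u y - c) ∂(R.kernel α x))
                ≤ ENNReal.ofReal (∫ y, max (u y - c) 0 ∂(R.kernel α x)) :=
                  ENNReal.ofReal_le_ofReal
                    (MeasureTheory.integral_mono hic hic.pos_part fun y => le_max_left _ _)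
              _ = ∫⁻ y, ENNReal.ofReal (max (u y - c) 0) ∂(R.kernel α x) :=
                  MeasureTheory.ofReal_integral_eq_lintegral_ofReal hic.pos_part
                    (Filter.Eventually.of_forall fun y => le_max_right _ _)
              _ = R.op α w x := by
                  refine lintegral_congr fun y => ?_
                  show ENNReal.ofReal (max (u y - c) 0) = ENNReal.ofReal (u y - c)
                  rcases le_total (u y - c) 0 with h | h
                  · rw [max_eq_right h, ENNReal.ofReal_zero, ENNReal.ofReal_eq_zero.2 h]
                  · rw [max_eq_left h]
    · exfalso
      have h0 : R.opR α u x = 0 := MeasureTheory.integral_undef hi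
      rw [h0, mul_zero] at hx
      linarith
  -- Step 2: finiteness of `∫⁻ w ^ pr`
  have hwLp : ∫⁻ x, w x ^ pr ∂m ≠ ⊤ := by
    refine ne_top_of_le_ne_top hLp (lintegral_mono fun x => ?_)
    refine ENNReal.rpow_le_rpow (ENNReal.ofReal_le_ofReal ?_) hpr0.le
    rcases abs_cases (u x) with h | h <;> linarith [h.1]
  -- Step 3: Jensen + sub-invariance
  set F : E → ℝ≥0∞ := fun x => ENNReal.ofReal α * R.op α w x with hFdef
  have hFm : Measurable F := (R.measurable_op α hα w hwm).const_mul _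
  have hjen : ∀ x, F x ^ pr ≤ ENNReal.ofReal α * R.op α (fun y => w y ^ pr) x := by
    intro x
    have hmass : (ENNReal.ofReal α • R.kernel α x) Set.univ ≤ 1 := by
      rw [MeasureTheory.Measure.smul_apply, smul_eq_mul]
      exact R.subMarkov α hα x
    have hj := aux_jensen (ENNReal.ofReal α • R.kernel α x) hmass hwm hpr
    rwa [MeasureTheory.lintegral_smul_measure, MeasureTheory.lintegral_smul_measure] at hj
  have hFint : ∫⁻ x, F x ^ pr ∂m ≤ ∫⁻ x, w x ^ pr ∂m := by
    calc ∫⁻ x, F x ^ pr ∂m ≤ ∫⁻ x, ENNReal.ofReal α * R.op α (fun y => w y ^ pr) x ∂m :=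
          lintegral_mono hjen
      _ = ENNReal.ofReal α * ∫⁻ x, R.op α (fun y => w y ^ pr) x ∂m :=
          MeasureTheory.lintegral_const_mul' _ _ ENNReal.ofReal_ne_top
      _ ≤ ∫⁻ x, w x ^ pr ∂m := hm α hα _ (hwm.pow_const pr)
  -- Step 4: conclude equality a.e.
  have hae : ∀ᵐ x ∂m, w x ^ pr = F x ^ pr := by
    refine MeasureTheory.ae_eq_of_ae_le_of_lintegral_le ?_ hwLp
      ((hFm.pow_const pr).aemeasurable) hFint
    filter_upwards [hsub] with x hx
    exact ENNReal.rpow_le_rpow hx hpr0.le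
  filter_upwards [hae] with x hx
  exact ENNReal.rpow_left_injective hpr0.ne' hx

/-- A pointwise lemma for invariant functions with a positive maximum value. -/
lemma pointwise_pos {μ : MeasureTheory.Measure E} {α : ℝ} (hα : 0 < α)
    (hmass : ENNReal.ofReal α * μ Set.univ ≤ 1)
    {v : E → ℝ} {a : ℝ} (hva : 0 < a)
    (hub : ∀ᵐ y ∂μ, v y ≤ a)
    (heq : ENNReal.ofReal a = ENNReal.ofReal α * ∫⁻ y, ENNReal.ofReal (v y) ∂μ) :
    (∀ᵐ y ∂μ, v y = a) ∧ ENNReal.ofReal α * μ Set.univ = 1 := by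
  have hane : ENNReal.ofReal a ≠ 0 := (ENNReal.ofReal_pos.2 hva).ne'
  have hαne : ENNReal.ofReal α ≠ 0 := (ENNReal.ofReal_pos.2 hα).ne'
  have hμtop : μ Set.univ ≠ ⊤ := by
    intro h
    rw [h, ENNReal.mul_top hαne] at hmass
    simp at hmass
  have hI : ∫⁻ y, ENNReal.ofReal (v y) ∂μ ≤ ENNReal.ofReal a * μ Set.univ := by
    calc ∫⁻ y, ENNReal.ofReal (v y) ∂μ ≤ ∫⁻ _, ENNReal.ofReal a ∂μ :=
          lintegral_mono_ae (hub.mono fun y hy => ENNReal.ofReal_le_ofReal hy)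
      _ = ENNReal.ofReal a * μ Set.univ := MeasureTheory.lintegral_const _
  have hchain : ENNReal.ofReal a ≤ ENNReal.ofReal a * (ENNReal.ofReal α * μ Set.univ) := by
    calc ENNReal.ofReal a = ENNReal.ofReal α * ∫⁻ y, ENNReal.ofReal (v y) ∂μ := heq
      _ ≤ ENNReal.ofReal α * (ENNReal.ofReal a * μ Set.univ) := by gcongr
      _ = ENNReal.ofReal a * (ENNReal.ofReal α * μ Set.univ) := by ring
  have hta : ENNReal.ofReal a * (ENNReal.ofReal α * μ Set.univ) = ENNReal.ofReal a * 1 := by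
    rw [mul_one]
    refine le_antisymm ?_ hchain
    calc ENNReal.ofReal a * (ENNReal.ofReal α * μ Set.univ) ≤ ENNReal.ofReal a * 1 :=
          mul_le_mul_right hmass _
      _ = ENNReal.ofReal a := mul_one _
  have ht1 : ENNReal.ofReal α * μ Set.univ = 1 :=
    (ENNReal.mul_right_inj hane ENNReal.ofReal_ne_top).1 hta
  refine ⟨?_, ht1⟩
  have hIeq : ∫⁻ y, ENNReal.ofReal (v y) ∂μ = ENNReal.ofReal a * μ Set.univ := by
    refine (ENNReal.mul_right_inj hαne ENNReal.ofReal_ne_top).1 ?_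
    rw [← heq, show ENNReal.ofReal α * (ENNReal.ofReal a * μ Set.univ)
      = ENNReal.ofReal a * (ENNReal.ofReal α * μ Set.univ) from by ring, ht1, mul_one]
  have hfin : ∫⁻ y, ENNReal.ofReal (v y) ∂μ ≠ ⊤ := by
    rw [hIeq]
    exact ENNReal.mul_ne_top ENNReal.ofReal_ne_top hμtop
  have hle : (fun y => ENNReal.ofReal (v y)) ≤ᵐ[μ] fun _ => ENNReal.ofReal a :=
    hub.mono fun y hy => ENNReal.ofReal_le_ofReal hy
  have hg : ∫⁻ _, ENNReal.ofReal a ∂μ ≤ ∫⁻ y, ENNReal.ofReal (v y) ∂μ := by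
    rw [MeasureTheory.lintegral_const, hIeq]
  have hae := MeasureTheory.ae_eq_of_ae_le_of_lintegral_le hle hfin aemeasurable_const hg
  filter_upwards [hae] with y hy
  by_cases h : 0 ≤ v y
  · exact (ENNReal.ofReal_eq_ofReal_iff h hva.le).1 hy
  · exfalso
    rw [ENNReal.ofReal_eq_zero.2 (le_of_not_ge h)] at hy
    exact hane hy.symm

/-- From the level identities, `u ≤ max (u x) 0` holds `kernel α x`-a.e., for a.e. `x`. -/
lemma level_ae_le (R : SubMarkovResolvent E) {α : ℝ} (hα : 0 < α) {u : E → ℝ}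
    (hmu : Measurable u) (x : E)
    (hx : ∀ c : ℚ, 0 ≤ (c:ℝ) → ENNReal.ofReal (u x - c)
      = ENNReal.ofReal α * R.op α (fun y => ENNReal.ofReal (u y - c)) x) :
    ∀ᵐ y ∂(R.kernel α x), u y ≤ max (u x) 0 := by
  have hcs : ∀ c : ℚ, 0 ≤ (c:ℝ) → u x ≤ c → ∀ᵐ y ∂(R.kernel α x), u y ≤ c := by
    intro c hc hxc
    have h := hx c hc
    rw [ENNReal.ofReal_eq_zero.2 (by linarith)] at h
    have h2 : R.op α (fun y => ENNReal.ofReal (u y - c)) x = 0 := by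
      rcases mul_eq_zero.1 h.symm with h' | h'
      · exact absurd h' (ENNReal.ofReal_pos.2 hα).ne'
      · exact h'
    have h3 : ∫⁻ y, ENNReal.ofReal (u y - c) ∂(R.kernel α x) = 0 := h2
    rw [lintegral_eq_zero_iff (f := fun y => ENNReal.ofReal (u y - (c:ℝ))) ((hmu.sub measurable_const).ennreal_ofReal)] at h3
    filter_upwards [h3] with y hy
    simp only [Pi.zero_apply, ENNReal.ofReal_eq_zero] at hy
    linarith
  have hall : ∀ᵐ y ∂(R.kernel α x), ∀ c : ℚ, 0 ≤ (c:ℝ) → u x ≤ c → u y ≤ c := by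
    rw [ae_all_iff]
    intro c
    by_cases h1 : 0 ≤ (c:ℝ) ∧ u x ≤ c
    · exact (hcs c h1.1 h1.2).mono fun y hy _ _ => hy
    · exact Filter.Eventually.of_forall fun y hc hxc => absurd ⟨hc, hxc⟩ h1
  filter_upwards [hall] with y hy
  by_contra hcon
  push_neg at hcon
  obtain ⟨q, hq1, hq2⟩ := exists_rat_btwn hcon
  have h0q : 0 ≤ (q:ℝ) := le_of_lt (lt_of_le_of_lt (le_max_right _ _) hq1)
  have hxq : u x ≤ q := le_trans (le_max_left _ _) hq1.le
  exact absurd (hy q h0q hxq) (by linarith)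

/-- Key lemma: a.e. `x`, the kernel `U_α(x, ·)` sees only the value `u x` of `u`, and has full
mass where `u x ≠ 0`. -/
lemma key (R : SubMarkovResolvent E) (m : MeasureTheory.Measure E) (hm : R.SubInvariant m)
    {pr : ℝ} (hpr : 1 ≤ pr) {u : E → ℝ} (hmu : Measurable u)
    (hLp : ∫⁻ x, (ENNReal.ofReal |u x|) ^ pr ∂m ≠ ⊤)
    {α : ℝ} (hα : 0 < α) (hh : ∀ᵐ x ∂m, α * R.opR α u x = u x) :
    ∀ᵐ x ∂m, (∀ᵐ y ∂(R.kernel α x), u y = u x) ∧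
      (u x ≠ 0 → ENNReal.ofReal α * R.kernel α x Set.univ = 1) := by
  have hhn : ∀ᵐ x ∂m, α * R.opR α (fun y => -u y) x = -u x := by
    filter_upwards [hh] with x hx
    have h0 : R.opR α (fun y => -u y) x = -R.opR α u x := MeasureTheory.integral_neg _
    rw [h0]; linarith
  have hLpn : ∫⁻ x, (ENNReal.ofReal |(-u x)|) ^ pr ∂m ≠ ⊤ := by
    simpa only [abs_neg] using hLp
  have hlev : ∀ᵐ x ∂m, ∀ c : ℚ, 0 ≤ (c:ℝ) → ENNReal.ofReal (u x - c)
      = ENNReal.ofReal α * R.op α (fun y => ENNReal.ofReal (u y - c)) x := by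
    rw [ae_all_iff]
    intro c
    by_cases hc : 0 ≤ (c:ℝ)
    · exact (R.harmonic_level m hm hpr hmu hLp hα hh hc).mono fun x hx _ => hx
    · exact Filter.Eventually.of_forall fun x h => absurd h hc
  have hlevn : ∀ᵐ x ∂m, ∀ c : ℚ, 0 ≤ (c:ℝ) → ENNReal.ofReal (-u x - c)
      = ENNReal.ofReal α * R.op α (fun y => ENNReal.ofReal (-u y - c)) x := by
    rw [ae_all_iff]
    intro c
    by_cases hc : 0 ≤ (c:ℝ)
    · exact (R.harmonic_level m hm hpr hmu.neg hLpn hα hhn hc).mono fun x hx _ => hx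
    · exact Filter.Eventually.of_forall fun x h => absurd h hc
  have h0 := R.harmonic_level m hm hpr hmu hLp hα hh (c := 0) le_rfl
  have h0n := R.harmonic_level m hm hpr hmu.neg hLpn hα hhn (c := 0) le_rfl
  filter_upwards [hlev, hlevn, h0, h0n] with x hx hxn h0x h0xn
  have habove : ∀ᵐ y ∂(R.kernel α x), u y ≤ max (u x) 0 := R.level_ae_le hα hmu x hx
  have hbelow : ∀ᵐ y ∂(R.kernel α x), -u y ≤ max (-u x) 0 :=
    R.level_ae_le hα hmu.neg x hxn
  rcases lt_trichotomy (u x) 0 with hneg | hzero | hpos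
  · -- u x < 0 : use v = -u
    have hub : ∀ᵐ y ∂(R.kernel α x), -u y ≤ -u x := by
      have hmax : max (-u x) 0 = -u x := max_eq_left (by linarith)
      filter_upwards [hbelow] with y hy
      rwa [hmax] at hy
    have heq : ENNReal.ofReal (-u x)
        = ENNReal.ofReal α * ∫⁻ y, ENNReal.ofReal (-u y) ∂(R.kernel α x) := by
      have := h0xn
      simp only [sub_zero] at this
      exact this
    obtain ⟨hconst, hmass1⟩ :=
      pointwise_pos hα (R.subMarkov α hα x) (by linarith : 0 < -u x) hub heq
    exact ⟨hconst.mono fun y hy => by linarith, fun _ => hmass1⟩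
  · -- u x = 0
    refine ⟨?_, fun h => absurd hzero h⟩
    filter_upwards [habove, hbelow] with y hy1 hy2
    rw [hzero] at hy1 hy2 ⊢
    simp only [neg_zero, max_self] at hy1 hy2
    linarith
  · -- u x > 0
    have hub : ∀ᵐ y ∂(R.kernel α x), u y ≤ u x := by
      have hmax : max (u x) 0 = u x := max_eq_left hpos.le
      filter_upwards [habove] with y hy
      rwa [hmax] at hy
    have heq : ENNReal.ofReal (u x)
        = ENNReal.ofReal α * ∫⁻ y, ENNReal.ofReal (u y) ∂(R.kernel α x) := by
      have := h0x
      simp only [sub_zero] at this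
      exact this
    obtain ⟨hconst, hmass1⟩ := pointwise_pos hα (R.subMarkov α hα x) hpos hub heq
    exact ⟨hconst, fun _ => hmass1⟩

/-- Transfer of null sets through duality. -/
lemma dual_transfer (R S : SubMarkovResolvent E) (m : MeasureTheory.Measure E)
    (hD : R.InDuality S m) {α : ℝ} (hα : 0 < α) {A B : Set E}
    (hAm : MeasurableSet A) (hBm : MeasurableSet B)
    (hnull : ∀ᵐ x ∂m, x ∈ A → R.kernel α x B = 0) :
    ∀ᵐ x ∂m, x ∈ B → S.kernel α x A = 0 := by
  have hdual := hD α hα (A.indicator 1) (B.indicator 1)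
    (measurable_one.indicator hAm) (measurable_one.indicator hBm)
  have hzero : ∫⁻ x, A.indicator 1 x * R.op α (B.indicator 1) x ∂m = 0 := by
    have hcong : (fun x => A.indicator 1 x * R.op α (B.indicator 1) x) =ᵐ[m] 0 := by
      filter_upwards [hnull] with x hx
      by_cases hxA : x ∈ A
      · have h1 : R.op α (B.indicator 1) x = 0 := by
          show ∫⁻ y, B.indicator 1 y ∂(R.kernel α x) = 0
          rw [MeasureTheory.lintegral_indicator_one hBm]
          exact hx hxA
        simp [h1]
      · simp [Set.indicator_of_notMem hxA]
    rw [lintegral_congr_ae hcong]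
    simp
  rw [hzero] at hdual
  have hmeas : AEMeasurable (fun x => B.indicator 1 x * S.op α (A.indicator 1) x) m :=
    ((measurable_one.indicator hBm).mul
      (S.measurable_op α hα _ (measurable_one.indicator hAm))).aemeasurable
  have hae := (lintegral_eq_zero_iff' hmeas).1 hdual.symm
  filter_upwards [hae] with x hx hxB
  simp only [Set.indicator_of_mem hxB, Pi.one_apply, one_mul, Pi.zero_apply] at hx
  have : ∫⁻ y, A.indicator 1 y ∂(S.kernel α x) = 0 := hx
  rwa [MeasureTheory.lintegral_indicator_one hAm] at this

/-- Dual key lemma. -/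
lemma dual_key (R S : SubMarkovResolvent E) (m : MeasureTheory.Measure E)
    (hm : R.SubInvariant m) (hD : R.InDuality S m)
    {pr : ℝ} (hpr : 1 ≤ pr) {u : E → ℝ} (hmu : Measurable u)
    (hLp : ∫⁻ x, (ENNReal.ofReal |u x|) ^ pr ∂m ≠ ⊤)
    {α : ℝ} (hα : 0 < α) (hh : ∀ᵐ x ∂m, α * R.opR α u x = u x) :
    ∀ᵐ x ∂m, (∀ᵐ y ∂(S.kernel α x), u y = u x) ∧
      (u x ≠ 0 → ENNReal.ofReal α * S.kernel α x Set.univ = 1) := by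
  have hpr0 : (0:ℝ) < pr := lt_of_lt_of_le zero_lt_one hpr
  have hkey := R.key m hm hpr hmu hLp hα hh
  -- Part A: transfer of constancy
  have hup : ∀ c : ℚ, ∀ᵐ x ∂m, u x ≤ (c:ℝ) → S.kernel α x {y | (c:ℝ) < u y} = 0 := by
    intro c
    have h := R.dual_transfer S m hD hα (A := {y | (c:ℝ) < u y}) (B := {y | u y ≤ (c:ℝ)})
      (measurableSet_lt measurable_const hmu) (measurableSet_le hmu measurable_const) ?_
    · exact h.mono fun x hx hxc => hx hxc
    · filter_upwards [hkey] with x hx hxA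
      refine measure_mono_null (fun y hy => ?_) (ae_iff.mp hx.1)
      simp only [Set.mem_setOf_eq] at hy hxA ⊢
      intro h'
      rw [h'] at hy
      linarith
  have hdown : ∀ c : ℚ, ∀ᵐ x ∂m, (c:ℝ) ≤ u x → S.kernel α x {y | u y < (c:ℝ)} = 0 := by
    intro c
    have h := R.dual_transfer S m hD hα (A := {y | u y < (c:ℝ)}) (B := {y | (c:ℝ) ≤ u y})
      (measurableSet_lt hmu measurable_const) (measurableSet_le measurable_const hmu) ?_
    · exact h.mono fun x hx hxc => hx hxc
    · filter_upwards [hkey] with x hx hxA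
      refine measure_mono_null (fun y hy => ?_) (ae_iff.mp hx.1)
      simp only [Set.mem_setOf_eq] at hy hxA ⊢
      intro h'
      rw [h'] at hy
      linarith
  -- Part B: transfer of full mass
  have hmassn : ∀ n : ℕ, ∀ᵐ x ∂m,
      1 / ((n:ℝ) + 1) < |u x| → ENNReal.ofReal α * S.kernel α x Set.univ = 1 := by
    intro n
    set ε : ℝ := 1 / ((n:ℝ) + 1) with hεdef
    have hε0 : 0 < ε := by positivity
    set B : Set E := {x | ε < |u x|} with hBdef
    have hBm : MeasurableSet B := measurableSet_lt measurable_const hmu.abs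
    have hBfin : m B ≠ ⊤ := by
      have hne0 : (ENNReal.ofReal ε) ^ pr ≠ 0 := by
        simp only [ne_eq, ENNReal.rpow_eq_zero_iff, not_or]
        constructor
        · rintro ⟨h1, -⟩
          exact absurd h1 (ENNReal.ofReal_pos.2 hε0).ne'
        · rintro ⟨h1, -⟩
          exact ENNReal.ofReal_ne_top h1
      have hnetop : (ENNReal.ofReal ε) ^ pr ≠ ⊤ := by
        refine ENNReal.rpow_ne_top_of_nonneg hpr0.le ENNReal.ofReal_ne_top
      have hsub : B ⊆ {x | (ENNReal.ofReal ε) ^ pr ≤ (ENNReal.ofReal |u x|) ^ pr} := by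
        intro x hx
        exact ENNReal.rpow_le_rpow (ENNReal.ofReal_le_ofReal (le_of_lt hx)) hpr0.le
      have hmarkov := MeasureTheory.meas_ge_le_lintegral_div (μ := m)
        ((hmu.abs.ennreal_ofReal.pow_const pr).aemeasurable) hne0 hnetop
      refine ne_top_of_le_ne_top ?_ ((measure_mono hsub).trans hmarkov)
      exact (ENNReal.div_lt_top hLp hne0).ne
    have hdual := hD α hα (fun _ => (1:ℝ≥0∞)) (B.indicator 1)
      measurable_const (measurable_one.indicator hBm)
    have hSop : ∀ x, S.op α (fun _ => (1:ℝ≥0∞)) x = S.kernel α x Set.univ :=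
      fun x => lintegral_one
    have hL : ∫⁻ x, (fun _ => (1:ℝ≥0∞)) x * R.op α (B.indicator 1) x ∂m
        = ∫⁻ x, B.indicator 1 x * R.kernel α x Set.univ ∂m := by
      refine lintegral_congr_ae ?_
      filter_upwards [hkey] with x hx
      simp only [one_mul]
      show ∫⁻ y, B.indicator 1 y ∂(R.kernel α x) = _
      rw [MeasureTheory.lintegral_indicator_one hBm]
      by_cases hxB : x ∈ B
      · simp only [Set.indicator_of_mem hxB, Pi.one_apply, one_mul]
        have hc : R.kernel α x Bᶜ = 0 := by
          refine measure_mono_null (fun y hy => ?_) (ae_iff.mp hx.1)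
          simp only [Set.mem_setOf_eq]
          intro h'
          exact hy (by rw [hBdef, Set.mem_setOf_eq, h']; exact hxB)
        refine le_antisymm (measure_mono (Set.subset_univ _)) ?_
        calc R.kernel α x Set.univ = R.kernel α x (B ∪ Bᶜ) := by rw [Set.union_compl_self]
          _ ≤ R.kernel α x B + R.kernel α x Bᶜ := measure_union_le _ _
          _ = R.kernel α x B := by rw [hc, add_zero]
      · simp only [Set.indicator_of_notMem hxB, zero_mul]
        refine measure_mono_null (fun y hy => ?_) (ae_iff.mp hx.1)
        simp only [Set.mem_setOf_eq]
        intro h'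
        exact hxB (by rw [hBdef, Set.mem_setOf_eq, ← h']; exact hy)
    have hkey2 : ∫⁻ x, B.indicator 1 x * S.kernel α x Set.univ ∂m
        = ∫⁻ x, B.indicator 1 x * R.kernel α x Set.univ ∂m := by
      calc ∫⁻ x, B.indicator 1 x * S.kernel α x Set.univ ∂m
          = ∫⁻ x, B.indicator 1 x * S.op α (fun _ => (1:ℝ≥0∞)) x ∂m :=
            lintegral_congr fun x => by rw [hSop]
        _ = ∫⁻ x, (fun _ => (1:ℝ≥0∞)) x * R.op α (B.indicator 1) x ∂m := hdual.symm
        _ = ∫⁻ x, B.indicator 1 x * R.kernel α x Set.univ ∂m := hL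
    have hf0S : ∫⁻ x, B.indicator 1 x * (ENNReal.ofReal α * S.kernel α x Set.univ) ∂m
        = ENNReal.ofReal α * ∫⁻ x, B.indicator 1 x * S.kernel α x Set.univ ∂m := by
      rw [← MeasureTheory.lintegral_const_mul' _ _ ENNReal.ofReal_ne_top]
      exact lintegral_congr fun x => by ring
    have hf0R : ∫⁻ x, B.indicator 1 x * (ENNReal.ofReal α * R.kernel α x Set.univ) ∂m
        = ENNReal.ofReal α * ∫⁻ x, B.indicator 1 x * R.kernel α x Set.univ ∂m := by
      rw [← MeasureTheory.lintegral_const_mul' _ _ ENNReal.ofReal_ne_top]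
      exact lintegral_congr fun x => by ring
    have hR1 : ∫⁻ x, B.indicator 1 x * (ENNReal.ofReal α * R.kernel α x Set.univ) ∂m
        = ∫⁻ x, B.indicator 1 x ∂m := by
      refine lintegral_congr_ae ?_
      filter_upwards [hkey] with x hx
      by_cases hxB : x ∈ B
      · have hne : u x ≠ 0 := by
          intro h'
          have : x ∈ B := hxB
          rw [hBdef, Set.mem_setOf_eq, h', abs_zero] at this
          linarith
        simp only [Set.indicator_of_mem hxB, Pi.one_apply, one_mul]
        rw [hx.2 hne]
      · simp only [Set.indicator_of_notMem hxB, zero_mul]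
    have hfin : ∫⁻ x, B.indicator 1 x * (ENNReal.ofReal α * S.kernel α x Set.univ) ∂m = m B := by
      rw [hf0S, hkey2, ← hf0R, hR1, MeasureTheory.lintegral_indicator_one hBm]
    have hle : (fun x => B.indicator 1 x * (ENNReal.ofReal α * S.kernel α x Set.univ))
        ≤ᵐ[m] fun x => B.indicator 1 x := by
      refine Filter.Eventually.of_forall fun x => ?_
      by_cases hxB : x ∈ B
      · show B.indicator 1 x * (ENNReal.ofReal α * S.kernel α x Set.univ) ≤ B.indicator 1 x
        have h1 : B.indicator (1 : E → ℝ≥0∞) x = 1 := by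
          simp [Set.indicator_of_mem hxB]
        rw [h1, one_mul]
        exact S.subMarkov α hα x
      · simp [Set.indicator_of_notMem hxB]
    have hae := MeasureTheory.ae_eq_of_ae_le_of_lintegral_le hle
      (by rw [hfin]; exact hBfin) ((measurable_one.indicator hBm)).aemeasurable
      (by rw [hfin, MeasureTheory.lintegral_indicator_one hBm])
    filter_upwards [hae] with x hx hεx
    have hxB : x ∈ B := hεx
    simp only [Set.indicator_of_mem hxB, Pi.one_apply, one_mul] at hx
    exact hx
  -- combine
  have hupA : ∀ᵐ x ∂m, ∀ c : ℚ, u x ≤ (c:ℝ) → S.kernel α x {y | (c:ℝ) < u y} = 0 :=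
    ae_all_iff.2 hup
  have hdownA : ∀ᵐ x ∂m, ∀ c : ℚ, (c:ℝ) ≤ u x → S.kernel α x {y | u y < (c:ℝ)} = 0 :=
    ae_all_iff.2 hdown
  have hmassA : ∀ᵐ x ∂m, ∀ n : ℕ,
      1 / ((n:ℝ) + 1) < |u x| → ENNReal.ofReal α * S.kernel α x Set.univ = 1 :=
    ae_all_iff.2 hmassn
  filter_upwards [hupA, hdownA, hmassA] with x hu1 hu2 hu3
  constructor
  · rw [ae_iff]
    have h1 : S.kernel α x {y | u x < u y} = 0 := by
      have hsub : {y | u x < u y} ⊆ ⋃ c : ℚ, {y | u x ≤ (c:ℝ) ∧ (c:ℝ) < u y} := by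
        intro y hy
        obtain ⟨q, hq1, hq2⟩ := exists_rat_btwn (show u x < u y from hy)
        exact Set.mem_iUnion.2 ⟨q, hq1.le, hq2⟩
      refine measure_mono_null hsub (measure_iUnion_null fun c => ?_)
      by_cases hc : u x ≤ (c:ℝ)
      · exact measure_mono_null (fun y hy => hy.2) (hu1 c hc)
      · exact measure_mono_null (fun y hy => (hc hy.1).elim) measure_empty
    have h2 : S.kernel α x {y | u y < u x} = 0 := by
      have hsub : {y | u y < u x} ⊆ ⋃ c : ℚ, {y | (c:ℝ) ≤ u x ∧ u y < (c:ℝ)} := by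
        intro y hy
        obtain ⟨q, hq1, hq2⟩ := exists_rat_btwn (show u y < u x from hy)
        exact Set.mem_iUnion.2 ⟨q, hq2.le, hq1⟩
      refine measure_mono_null hsub (measure_iUnion_null fun c => ?_)
      by_cases hc : (c:ℝ) ≤ u x
      · exact measure_mono_null (fun y hy => hy.2) (hu2 c hc)
      · exact measure_mono_null (fun y hy => (hc hy.1).elim) measure_empty
    refine measure_mono_null (fun y hy => ?_) (measure_union_null h1 h2)
    rcases lt_or_gt_of_ne (hy : ¬ u y = u x) with h | h
    · exact Or.inr h
    · exact Or.inl h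
  · intro hne
    obtain ⟨n, hn⟩ := exists_nat_one_div_lt (abs_pos.2 hne)
    exact hu3 n hn

end SubMarkovResolvent

end Aux

/-- If `u ∈ L^p(E,m)`, `1 ≤ p < ∞`, satisfies `α U_α u = u` `m`-a.e. for all `α > 0`, then
`{u ≤ c}` is `U`-absorbing for every `c ≥ 0`, `u` is `U`-invariant, and
`α U*_α u = u` `m`-a.e. for all `α > 0`. -/
theorem harmonic_implies_invariant {E : Type*} [MeasurableSpace E]
    (R S : SubMarkovResolvent E) (m : MeasureTheory.Measure E) [MeasureTheory.SigmaFinite m]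
    (hm : R.SubInvariant m) (hD : R.InDuality S m)
    (p : ℝ≥0∞) (hp : 1 ≤ p) (hp' : p ≠ ⊤)
    (u : E → ℝ) (hmu : Measurable u) (hu : MeasureTheory.MemLp u p m)
    (hharm : ∀ α : ℝ, 0 < α → ∀ᵐ x ∂m, α * R.opR α u x = u x) :
    (∀ c : ℝ, 0 ≤ c → R.Absorbing m {x | u x ≤ c}) ∧ R.Invariant m u ∧
      (∀ α : ℝ, 0 < α → ∀ᵐ x ∂m, α * S.opR α u x = u x) := by
  classical
  set pr : ℝ := p.toReal with hprdef
  have hp0 : p ≠ 0 := by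
    intro h
    rw [h] at hp
    exact absurd hp (by simp)
  have hpr : 1 ≤ pr := by
    have := ENNReal.toReal_mono hp' hp
    rwa [ENNReal.toReal_one] at this
  have hpr0 : (0:ℝ) < pr := lt_of_lt_of_le zero_lt_one hpr
  have hLp : ∫⁻ x, (ENNReal.ofReal |u x|) ^ pr ∂m ≠ ⊤ := by
    have h1 := hu.2
    rw [eLpNorm_eq_lintegral_rpow_enorm_toReal hp0 hp'] at h1
    have h2 : ∫⁻ x, ‖u x‖ₑ ^ p.toReal ∂m ≠ ⊤ := by
      intro hcon
      rw [hcon, ENNReal.top_rpow_of_pos (by positivity)] at h1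
      exact absurd h1 (lt_irrefl _)
    have h3 : ∀ x : E, (ENNReal.ofReal |u x|) = ‖u x‖ₑ := fun x => by
      rw [← Real.norm_eq_abs, ofReal_norm_eq_enorm]
    refine ne_top_of_le_ne_top h2 (le_of_eq (lintegral_congr fun x => ?_))
    rw [h3]
  refine ⟨?_, ?_, ?_⟩
  · -- absorbing level sets
    intro c hc
    have hAm : MeasurableSet {x : E | u x ≤ c} := measurableSet_le hmu measurable_const
    refine ⟨hAm, ?_⟩
    have hconst : ∀ᵐ x ∂m, ∀ n : ℕ,
        ∀ᵐ y ∂(R.kernel (1 / ((n:ℝ) + 1)) x), u y = u x := by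
      rw [ae_all_iff]
      intro n
      have hn : (0:ℝ) < 1 / ((n:ℝ) + 1) := by positivity
      exact (R.key m hm hpr hmu hLp hn (hharm _ hn)).mono fun x hx => hx.1
    filter_upwards [hconst] with x hx hxA
    have hind : Measurable ({x : E | u x ≤ c}ᶜ.indicator (1 : E → ℝ≥0∞)) :=
      measurable_one.indicator hAm.compl
    refine le_antisymm ?_ zero_le
    refine iSup_le fun β => iSup_le fun hβ => ?_
    obtain ⟨n, hn⟩ := exists_nat_one_div_lt hβ
    have hn0 : (0:ℝ) < 1 / ((n:ℝ) + 1) := by positivity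
    have hzero : R.op (1 / ((n:ℝ) + 1)) ({x : E | u x ≤ c}ᶜ.indicator 1) x = 0 := by
      show ∫⁻ y, {x : E | u x ≤ c}ᶜ.indicator 1 y ∂(R.kernel (1 / ((n:ℝ) + 1)) x) = 0
      rw [MeasureTheory.lintegral_indicator_one hAm.compl]
      refine measure_mono_null (fun y hy => ?_) (ae_iff.mp (hx n))
      simp only [Set.mem_compl_iff, Set.mem_setOf_eq] at hy ⊢
      intro h'
      exact hy (by rw [h']; exact hxA)
    calc R.op β ({x : E | u x ≤ c}ᶜ.indicator 1) x
        ≤ R.op (1 / ((n:ℝ) + 1)) ({x : E | u x ≤ c}ᶜ.indicator 1) x :=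
          R.op_anti hn0 hn.le hind x
      _ = 0 := hzero
  · -- invariance
    intro α hα f hf hf0 hfbd
    filter_upwards [R.key m hm hpr hmu hLp hα (hharm α hα)] with x hx
    have hconst : (fun y => u y * f y) =ᵐ[R.kernel α x] fun y => u x * f y :=
      hx.1.mono fun y hy => by show u y * f y = u x * f y; rw [hy]
    show ∫ y, u y * f y ∂(R.kernel α x) = u x * ∫ y, f y ∂(R.kernel α x)
    rw [MeasureTheory.integral_congr_ae hconst]
    exact integral_const_mul (u x) f
  · -- dual resolvent
    intro α hα
    filter_upwards [SubMarkovResolvent.dual_key R S m hm hD hpr hmu hLp hα (hharm α hα)]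
      with x hx
    haveI : MeasureTheory.IsFiniteMeasure (S.kernel α x) := S.kernel_fin hα x
    have hconst : u =ᵐ[S.kernel α x] fun _ => u x := hx.1
    have hopR : S.opR α u x = (S.kernel α x Set.univ).toReal * u x := by
      show ∫ y, u y ∂(S.kernel α x) = _
      rw [MeasureTheory.integral_congr_ae hconst, MeasureTheory.integral_const, smul_eq_mul, measureReal_def]
    rw [hopR]
    by_cases h0 : u x = 0
    · rw [h0, mul_zero, mul_zero]
    · have hm1 := hx.2 h0
      have hmassR : α * (S.kernel α x Set.univ).toReal = 1 := by
        have := congrArg ENNReal.toReal hm1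
        rwa [ENNReal.toReal_mul, ENNReal.toReal_ofReal hα.le, ENNReal.toReal_one] at this
      calc α * ((S.kernel α x Set.univ).toReal * u x)
          = (α * (S.kernel α x Set.univ).toReal) * u x := by ring
        _ = u x := by rw [hmassR, one_mul]
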